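/- Hessian extra decay estimate for the wave equation inside a cone: suppose u: R × R^2 → R is smooth and -□u = F (with -□ = -∂_t^2 + Δ). Then there is an absolute constant C such that for all (t,x) with t ≥ 1 and |x| ≤ 3t and all α, β ∈ {0,1,2}, |∂_α ∂_β u(t,x)| ≤ C/(1+|t-|x||) · (Σ_{Γ ∈ {∂, L, Ω}} |∂Γ u| + |∂u|)(t,x) + C t/(1+|t-|x||) · |F(t,x)|, where |∂Γu| denotes the sum of |∂_{α'} Γ u| over all first derivatives ∂_{α'} and fields Γ in {∂_0, ∂_1, ∂_2, Ω, L_1, L_2}, and |∂u| = Σ_{α'} |∂_{α'} u|. -/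

import Mathlib

noncomputable section

/-- Partial derivative in the `i`-th coordinate on `ℝ^{1+2}` (coordinates `(t, x₁, x₂)`). -/
def pd (i : Fin 3) (u : (Fin 3 → ℝ) → ℝ) : (Fin 3 → ℝ) → ℝ :=
  fun p => fderiv ℝ u p (Pi.single i 1)

/-- The admissible vector fields: `∂_t, ∂_1, ∂_2`, the rotation `Ω = x₁∂₂ - x₂∂₁`,
and the boosts `L_1, L_2` with `L_a = x_a ∂_t + t ∂_a`. -/
def vf : Fin 6 → ((Fin 3 → ℝ) → ℝ) → ((Fin 3 → ℝ) → ℝ)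
  | 0 => pd 0
  | 1 => pd 1
  | 2 => pd 2
  | 3 => fun u p => p 1 * pd 2 u p - p 2 * pd 1 u p
  | 4 => fun u p => p 1 * pd 0 u p + p 0 * pd 1 u p
  | 5 => fun u p => p 2 * pd 0 u p + p 0 * pd 2 u p

lemma contDiff_pd {u : (Fin 3 → ℝ) → ℝ} (hu : ContDiff ℝ (⊤ : ℕ∞) u) (i : Fin 3) :
    ContDiff ℝ (⊤ : ℕ∞) (pd i u) :=
  (hu.fderiv_right (m := (⊤:ℕ∞)) (by exact_mod_cast le_top)).clm_apply contDiff_const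

lemma pd_eq_fderiv2 {u : (Fin 3 → ℝ) → ℝ} (hu : ContDiff ℝ (⊤ : ℕ∞) u) (i j : Fin 3)
    (p : Fin 3 → ℝ) :
    pd i (pd j u) p = fderiv ℝ (fderiv ℝ u) p (Pi.single i 1) (Pi.single j 1) := by
  have h1 : DifferentiableAt ℝ (fderiv ℝ u) p :=
    ((hu.fderiv_right (m := (⊤:ℕ∞)) (by exact_mod_cast le_top)).differentiable
      (by simp)) p
  show fderiv ℝ (fun q => fderiv ℝ u q (Pi.single j 1)) p (Pi.single i 1) = _
  rw [fderiv_clm_apply h1 (differentiableAt_const _)]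
  simp

lemma pd_symm {u : (Fin 3 → ℝ) → ℝ} (hu : ContDiff ℝ (⊤ : ℕ∞) u) (i j : Fin 3)
    (p : Fin 3 → ℝ) :
    pd i (pd j u) p = pd j (pd i u) p := by
  rw [pd_eq_fderiv2 hu, pd_eq_fderiv2 hu]
  have h1 : DifferentiableAt ℝ (fderiv ℝ u) p :=
    ((hu.fderiv_right (m := (⊤:ℕ∞)) (by exact_mod_cast le_top)).differentiable
      (by simp)) p
  exact second_derivative_symmetric
    (fun y => ((hu.differentiable (by simp)) y).hasFDerivAt)
    h1.hasFDerivAt _ _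

lemma pd_comb {g h : (Fin 3 → ℝ) → ℝ} (hg : ContDiff ℝ (⊤ : ℕ∞) g) (hh : ContDiff ℝ (⊤ : ℕ∞) h)
    (a b k : Fin 3) (p : Fin 3 → ℝ) :
    pd k (fun q => q a * g q + q b * h q) p
      = (if k = a then 1 else 0) * g p + p a * pd k g p
        + ((if k = b then 1 else 0) * h p + p b * pd k h p) := by
  have hga : DifferentiableAt ℝ g p := hg.differentiable (by simp) p
  have hha : DifferentiableAt ℝ h p := hh.differentiable (by simp) p
  have hpa : DifferentiableAt ℝ (fun q : Fin 3 → ℝ => q a) p :=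
    (ContinuousLinearMap.proj a : (Fin 3 → ℝ) →L[ℝ] ℝ).differentiableAt
  have hpb : DifferentiableAt ℝ (fun q : Fin 3 → ℝ => q b) p :=
    (ContinuousLinearMap.proj b : (Fin 3 → ℝ) →L[ℝ] ℝ).differentiableAt
  have ea : fderiv ℝ (fun q : Fin 3 → ℝ => q a) p
      = (ContinuousLinearMap.proj a : (Fin 3 → ℝ) →L[ℝ] ℝ) :=
    (ContinuousLinearMap.proj a : (Fin 3 → ℝ) →L[ℝ] ℝ).fderiv
  have eb : fderiv ℝ (fun q : Fin 3 → ℝ => q b) p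
      = (ContinuousLinearMap.proj b : (Fin 3 → ℝ) →L[ℝ] ℝ) :=
    (ContinuousLinearMap.proj b : (Fin 3 → ℝ) →L[ℝ] ℝ).fderiv
  show fderiv ℝ (fun q => q a * g q + q b * h q) p (Pi.single k 1) = _
  rw [fderiv_fun_add (f := fun q => q a * g q) (g := fun q => q b * h q) (hpa.mul hga) (hpb.mul hha), fderiv_fun_mul hpa hga, fderiv_fun_mul hpb hha, ea, eb]
  simp only [ContinuousLinearMap.add_apply, ContinuousLinearMap.smul_apply, smul_eq_mul,
    ContinuousLinearMap.proj_apply, pd, Pi.single_apply]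
  simp only [eq_comm]
  ring

lemma abs8 (a b c d e f g h : ℝ) :
    |a+b+c+d+e+f+g+h| ≤ |a|+|b|+|c|+|d|+|e|+|f|+|g|+|h| := by
  have h1 := abs_add_le (a+b+c+d+e+f+g) h
  have h2 := abs_add_le (a+b+c+d+e+f) g
  have h3 := abs_add_le (a+b+c+d+e) f
  have h4 := abs_add_le (a+b+c+d) e
  have h5 := abs_add_le (a+b+c) d
  have h6 := abs_add_le (a+b) c
  have h7 := abs_add_le a b
  linarith

lemma absmul {a b A B : ℝ} (ha : |a| ≤ A) (hb : |b| ≤ B) : |a*b| ≤ A*B := by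
  rw [abs_mul]
  exact mul_le_mul ha hb (abs_nonneg b) ((abs_nonneg a).trans ha)

lemma abs3 (a b c : ℝ) : |a+b+c| ≤ |a|+|b|+|c| := by
  have h1 := abs_add_le (a+b) c
  have h2 := abs_add_le a b
  linarith

lemma step {t H X D G P Fv a b : ℝ} (ht : 1 ≤ t) (hH0 : 0 < H) (hH5 : H ≤ 5*t)
    (hGP : 0 ≤ G + P)
    (hX : t * X ≤ (G + P) + 3*(t*D)) (hD : H * D ≤ a*(G+P) + b*(t*Fv)) :
    H * X ≤ (5 + 3*a)*(G+P) + (3*b)*(t*Fv) := by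
  have h1 : t*(H*X) ≤ H*(G+P) + 3*(t*(H*D)) := by
    nlinarith [mul_le_mul_of_nonneg_left hX (le_of_lt hH0)]
  have h2 : 3*(t*(H*D)) ≤ 3*t*(a*(G+P) + b*(t*Fv)) := by
    nlinarith [mul_le_mul_of_nonneg_left hD (by linarith : (0:ℝ) ≤ 3*t)]
  have h3 : H*(G+P) ≤ 5*t*(G+P) := by
    nlinarith [mul_le_mul_of_nonneg_right hH5 hGP]
  have h4 : t*(H*X) ≤ t*((5 + 3*a)*(G+P) + (3*b)*(t*Fv)) := by nlinarith [h1, h2, h3]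
  exact le_of_mul_le_mul_left h4 (by linarith)

/-- Extra decay for the Hessian of a wave component: if `-□u = F`
(with `-□ = -∂_t² + Δ`) then, in the region `{t ≥ 1, |x| ≤ 3t}`,
`|∂∂u| ≲ ⟨t-r⟩⁻¹ (|∂Γu| + |∂u|) + t ⟨t-r⟩⁻¹ |F|`. -/
theorem hessian_extra_decay :
    ∃ C : ℝ, 0 < C ∧ ∀ (u F : (Fin 3 → ℝ) → ℝ), ContDiff ℝ (⊤ : ℕ∞) u →
      (∀ p, F p = -pd 0 (pd 0 u) p + pd 1 (pd 1 u) p + pd 2 (pd 2 u) p) →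
      ∀ p : Fin 3 → ℝ, 1 ≤ p 0 → Real.sqrt ((p 1) ^ 2 + (p 2) ^ 2) ≤ 3 * p 0 →
      ∀ α β : Fin 3,
        |pd α (pd β u) p| ≤
          C / (1 + |p 0 - Real.sqrt ((p 1) ^ 2 + (p 2) ^ 2)|) *
            ((∑ i : Fin 6, ∑ α' : Fin 3, |pd α' (vf i u) p|) +
              ∑ α' : Fin 3, |pd α' u p|)
          + C * p 0 / (1 + |p 0 - Real.sqrt ((p 1) ^ 2 + (p 2) ^ 2)|) * |F p| := by
  refine ⟨200, by norm_num, ?_⟩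
  intro u F hu hF p ht hr3 α β
  set t := p 0 with hTdef
  set r := Real.sqrt ((p 1) ^ 2 + (p 2) ^ 2) with hrdef
  set G := ∑ i : Fin 6, ∑ α' : Fin 3, |pd α' (vf i u) p| with hGdef
  set P := ∑ α' : Fin 3, |pd α' u p| with hPdef
  set H := 1 + |t - r| with hHdef
  -- basic facts
  have hrnn : 0 ≤ r := Real.sqrt_nonneg _
  have hr2 : r ^ 2 = (p 1) ^ 2 + (p 2) ^ 2 := Real.sq_sqrt (by positivity)
  have hx1 : |p 1| ≤ r := by
    rw [← Real.sqrt_sq_eq_abs, hrdef]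
    exact Real.sqrt_le_sqrt (by nlinarith [sq_nonneg (p 2)])
  have hx2 : |p 2| ≤ r := by
    rw [← Real.sqrt_sq_eq_abs, hrdef]
    exact Real.sqrt_le_sqrt (by nlinarith [sq_nonneg (p 1)])
  have hH1 : (1:ℝ) ≤ H := by
    have := abs_nonneg (t - r); linarith
  have hH0 : (0:ℝ) < H := by linarith
  have hGle : ∀ (i : Fin 6) (k : Fin 3), |pd k (vf i u) p| ≤ G := by
    intro i k
    have h2 : |pd k (vf i u) p| ≤ ∑ α' : Fin 3, |pd α' (vf i u) p| :=
      Finset.single_le_sum (f := fun α' : Fin 3 => |pd α' (vf i u) p|)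
        (fun _ _ => abs_nonneg _) (Finset.mem_univ k)
    have h1 : ∑ α' : Fin 3, |pd α' (vf i u) p| ≤ G :=
      Finset.single_le_sum (f := fun i => ∑ α' : Fin 3, |pd α' (vf i u) p|)
        (fun j _ => Finset.sum_nonneg fun _ _ => abs_nonneg _) (Finset.mem_univ i)
    linarith
  have hvle : ∀ k : Fin 3, |pd k u p| ≤ P := fun k =>
    Finset.single_le_sum (f := fun α' : Fin 3 => |pd α' u p|)
      (fun _ _ => abs_nonneg _) (Finset.mem_univ k)
  clear_value t r G P H
  have hGnn : 0 ≤ G := le_trans (abs_nonneg _) (hGle 0 0)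
  have hPnn : 0 ≤ P := le_trans (abs_nonneg _) (hvle 0)
  have hFnn : 0 ≤ |F p| := abs_nonneg _
  have htriv : ∀ i j : Fin 3, |pd i (pd j u) p| ≤ G := by
    intro i j
    fin_cases j
    · exact hGle 0 i
    · exact hGle 1 i
    · exact hGle 2 i
  have main : ∀ i j : Fin 3, H * |pd i (pd j u) p| ≤ 200*(G+P) + 200*(t*|F p|) := by
    rcases le_total |t - r| 1 with hc | hc
    · intro i j
      have h1 := htriv i j
      have h2 : 0 ≤ |pd i (pd j u) p| := abs_nonneg _
      nlinarith [mul_le_mul_of_nonneg_right (show H ≤ 2 by linarith) h2, ht]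
    · -- main case : 1 ≤ |t - r|
      have ht0 : (0:ℝ) < t := lt_of_lt_of_le one_pos ht
      have htabs : |t| = t := abs_of_pos ht0
      have hx1t : |p 1| ≤ 3*t := le_trans hx1 hr3
      have hx2t : |p 2| ≤ 3*t := le_trans hx2 hr3
      have hH5 : H ≤ 5*t := by
        have h1 : |t - r| ≤ |t| + |r| := by
          rw [sub_eq_add_neg]
          exact (abs_add_le t (-r)).trans (by rw [abs_neg])
        rw [htabs, abs_of_nonneg hrnn] at h1
        rw [hHdef]; linarith
      have hd01s : pd 1 (pd 0 u) p = pd 0 (pd 1 u) p := pd_symm hu 1 0 p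
      have hd02s : pd 2 (pd 0 u) p = pd 0 (pd 2 u) p := pd_symm hu 2 0 p
      have hd12s : pd 2 (pd 1 u) p = pd 1 (pd 2 u) p := pd_symm hu 2 1 p
      have hv4 : ∀ k : Fin 3, pd k (vf 4 u) p
          = (if k = 1 then 1 else 0) * pd 0 u p + p 1 * pd k (pd 0 u) p
            + ((if k = 0 then 1 else 0) * pd 1 u p + p 0 * pd k (pd 1 u) p) := fun k =>
        pd_comb (contDiff_pd hu 0) (contDiff_pd hu 1) 1 0 k p
      have hv5 : ∀ k : Fin 3, pd k (vf 5 u) p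
          = (if k = 2 then 1 else 0) * pd 0 u p + p 2 * pd k (pd 0 u) p
            + ((if k = 0 then 1 else 0) * pd 2 u p + p 0 * pd k (pd 2 u) p) := fun k =>
        pd_comb (contDiff_pd hu 0) (contDiff_pd hu 2) 2 0 k p
      have e40 := hv4 0
      have e41 := hv4 1
      have e42 := hv4 2
      have e50 := hv5 0
      have e52 := hv5 2
      simp only [Fin.isValue, Fin.reduceEq, reduceIte, one_mul, zero_mul, zero_add, add_zero] at e40 e41 e42 e50 e52
      rw [← hTdef] at e40 e41 e42 e50 e52
      rw [hd01s] at e41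
      rw [hd02s, hd12s] at e42
      rw [hd02s] at e52
      -- key identity
      have hI : (t^2 - ((p 1)^2 + (p 2)^2)) * pd 0 (pd 0 u) p
          = t * pd 1 (vf 4 u) p + t * pd 2 (vf 5 u) p + (-(p 1)) * pd 0 (vf 4 u) p
            + (-(p 2)) * pd 0 (vf 5 u) p + (-(t^2)) * F p + ((-2)*t) * pd 0 u p
            + p 1 * pd 1 u p + p 2 * pd 2 u p := by
        linear_combination (-t) * e41 + (-t) * e52 + p 1 * e40 + p 2 * e50 + t^2 * (hF p)
      have habs : |(t^2 - ((p 1)^2 + (p 2)^2)) * pd 0 (pd 0 u) p|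
          ≤ 8*t*(G+P) + t^2*|F p| := by
        rw [hI]
        have g1 : |t * pd 1 (vf 4 u) p| ≤ t * G := absmul htabs.le (hGle 4 1)
        have g2 : |t * pd 2 (vf 5 u) p| ≤ t * G := absmul htabs.le (hGle 5 2)
        have g3 : |(-(p 1)) * pd 0 (vf 4 u) p| ≤ (3*t) * G := by
          refine absmul ?_ (hGle 4 0); rwa [abs_neg]
        have g4 : |(-(p 2)) * pd 0 (vf 5 u) p| ≤ (3*t) * G := by
          refine absmul ?_ (hGle 5 0); rwa [abs_neg]
        have g5 : |(-(t^2)) * F p| ≤ t^2 * |F p| := by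
          refine absmul ?_ le_rfl; rw [abs_neg, abs_of_pos (by positivity)]
        have g6 : |((-2)*t) * pd 0 u p| ≤ (2*t) * P := by
          refine absmul ?_ (hvle 0)
          rw [abs_mul, htabs, abs_neg]; norm_num
        have g7 : |p 1 * pd 1 u p| ≤ (3*t) * P := absmul hx1t (hvle 1)
        have g8 : |p 2 * pd 2 u p| ≤ (3*t) * P := absmul hx2t (hvle 2)
        have h8 := abs8 (t * pd 1 (vf 4 u) p) (t * pd 2 (vf 5 u) p)
          ((-(p 1)) * pd 0 (vf 4 u) p) ((-(p 2)) * pd 0 (vf 5 u) p) ((-(t^2)) * F p)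
          (((-2)*t) * pd 0 u p) (p 1 * pd 1 u p) (p 2 * pd 2 u p)
        linarith
      -- from the identity to the d00 bound
      have hfac : |t^2 - ((p 1)^2 + (p 2)^2)| = (t+r)*|t-r| := by
        have : t^2 - ((p 1)^2 + (p 2)^2) = (t+r)*(t-r) := by rw [← hr2]; ring
        rw [this, abs_mul, abs_of_nonneg (by linarith : (0:ℝ) ≤ t+r)]
      have hb00 : H * |pd 0 (pd 0 u) p| ≤ 16*(G+P) + 2*(t*|F p|) := by
        have h1' : t*(|t-r| * |pd 0 (pd 0 u) p|) ≤ 8*t*(G+P) + t^2*|F p| := by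
          have e2 : |(t^2 - ((p 1)^2 + (p 2)^2)) * pd 0 (pd 0 u) p|
              = (t + r) * |t - r| * |pd 0 (pd 0 u) p| := by rw [abs_mul, hfac]
          rw [e2] at habs
          have hXY : 0 ≤ |t - r| * |pd 0 (pd 0 u) p| :=
            mul_nonneg (abs_nonneg _) (abs_nonneg _)
          have h3' := mul_le_mul_of_nonneg_right (show t ≤ t + r by linarith) hXY
          linarith [h3', habs]
        have hc1 : |t-r| * |pd 0 (pd 0 u) p| ≤ 8*(G+P) + t*|F p| := by
          have h2' : t * (|t-r| * |pd 0 (pd 0 u) p|) ≤ t * (8*(G+P) + t*|F p|) := by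
            linarith
          exact le_of_mul_le_mul_left h2' ht0
        have hH2 : H ≤ 2*|t-r| := by rw [hHdef]; linarith
        have hm := mul_le_mul_of_nonneg_right hH2 (abs_nonneg (pd 0 (pd 0 u) p))
        linarith [hm, hc1]
      -- linear relations for the other second derivatives
      have habs01 : t * |pd 0 (pd 1 u) p| ≤ (G+P) + 3*(t*|pd 0 (pd 0 u) p|) := by
        have hrel : t * pd 0 (pd 1 u) p
            = pd 0 (vf 4 u) p + (-(p 1)) * pd 0 (pd 0 u) p + (-(pd 1 u p)) := by
          linear_combination -e40
        have h1 : |t * pd 0 (pd 1 u) p| ≤ G + (3*t)*|pd 0 (pd 0 u) p| + P := by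
          rw [hrel]
          have g1 := hGle 4 0
          have g2 : |(-(p 1)) * pd 0 (pd 0 u) p| ≤ (3*t)*|pd 0 (pd 0 u) p| := by
            refine absmul ?_ le_rfl; rwa [abs_neg]
          have g3 : |(-(pd 1 u p))| ≤ P := by rw [abs_neg]; exact hvle 1
          linarith [abs3 (pd 0 (vf 4 u) p) ((-(p 1)) * pd 0 (pd 0 u) p) (-(pd 1 u p))]
        rw [abs_mul, htabs] at h1
        linarith
      have habs02 : t * |pd 0 (pd 2 u) p| ≤ (G+P) + 3*(t*|pd 0 (pd 0 u) p|) := by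
        have hrel : t * pd 0 (pd 2 u) p
            = pd 0 (vf 5 u) p + (-(p 2)) * pd 0 (pd 0 u) p + (-(pd 2 u p)) := by
          linear_combination -e50
        have h1 : |t * pd 0 (pd 2 u) p| ≤ G + (3*t)*|pd 0 (pd 0 u) p| + P := by
          rw [hrel]
          have g1 := hGle 5 0
          have g2 : |(-(p 2)) * pd 0 (pd 0 u) p| ≤ (3*t)*|pd 0 (pd 0 u) p| := by
            refine absmul ?_ le_rfl; rwa [abs_neg]
          have g3 : |(-(pd 2 u p))| ≤ P := by rw [abs_neg]; exact hvle 2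
          linarith [abs3 (pd 0 (vf 5 u) p) ((-(p 2)) * pd 0 (pd 0 u) p) (-(pd 2 u p))]
        rw [abs_mul, htabs] at h1
        linarith
      have habs11 : t * |pd 1 (pd 1 u) p| ≤ (G+P) + 3*(t*|pd 0 (pd 1 u) p|) := by
        have hrel : t * pd 1 (pd 1 u) p
            = pd 1 (vf 4 u) p + (-(p 1)) * pd 0 (pd 1 u) p + (-(pd 0 u p)) := by
          linear_combination -e41
        have h1 : |t * pd 1 (pd 1 u) p| ≤ G + (3*t)*|pd 0 (pd 1 u) p| + P := by
          rw [hrel]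
          have g1 := hGle 4 1
          have g2 : |(-(p 1)) * pd 0 (pd 1 u) p| ≤ (3*t)*|pd 0 (pd 1 u) p| := by
            refine absmul ?_ le_rfl; rwa [abs_neg]
          have g3 : |(-(pd 0 u p))| ≤ P := by rw [abs_neg]; exact hvle 0
          linarith [abs3 (pd 1 (vf 4 u) p) ((-(p 1)) * pd 0 (pd 1 u) p) (-(pd 0 u p))]
        rw [abs_mul, htabs] at h1
        linarith
      have habs22 : t * |pd 2 (pd 2 u) p| ≤ (G+P) + 3*(t*|pd 0 (pd 2 u) p|) := by
        have hrel : t * pd 2 (pd 2 u) p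
            = pd 2 (vf 5 u) p + (-(p 2)) * pd 0 (pd 2 u) p + (-(pd 0 u p)) := by
          linear_combination -e52
        have h1 : |t * pd 2 (pd 2 u) p| ≤ G + (3*t)*|pd 0 (pd 2 u) p| + P := by
          rw [hrel]
          have g1 := hGle 5 2
          have g2 : |(-(p 2)) * pd 0 (pd 2 u) p| ≤ (3*t)*|pd 0 (pd 2 u) p| := by
            refine absmul ?_ le_rfl; rwa [abs_neg]
          have g3 : |(-(pd 0 u p))| ≤ P := by rw [abs_neg]; exact hvle 0
          linarith [abs3 (pd 2 (vf 5 u) p) ((-(p 2)) * pd 0 (pd 2 u) p) (-(pd 0 u p))]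
        rw [abs_mul, htabs] at h1
        linarith
      have habs12 : t * |pd 1 (pd 2 u) p| ≤ (G+P) + 3*(t*|pd 0 (pd 2 u) p|) := by
        have hrel : t * pd 1 (pd 2 u) p
            = pd 2 (vf 4 u) p + (-(p 1)) * pd 0 (pd 2 u) p + (-(0:ℝ)) := by
          linear_combination -e42
        have h1 : |t * pd 1 (pd 2 u) p| ≤ G + (3*t)*|pd 0 (pd 2 u) p| + P := by
          rw [hrel]
          have g1 := hGle 4 2
          have g2 : |(-(p 1)) * pd 0 (pd 2 u) p| ≤ (3*t)*|pd 0 (pd 2 u) p| := by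
            refine absmul ?_ le_rfl; rwa [abs_neg]
          have g3 : |(-(0:ℝ))| ≤ P := by simpa using hPnn
          linarith [abs3 (pd 2 (vf 4 u) p) ((-(p 1)) * pd 0 (pd 2 u) p) (-(0:ℝ))]
        rw [abs_mul, htabs] at h1
        linarith
      have hGP : (0:ℝ) ≤ G + P := by linarith
      have hb01 : H * |pd 0 (pd 1 u) p| ≤ 53*(G+P) + 6*(t*|F p|) := by
        have := step ht hH0 hH5 hGP habs01 hb00; linarith
      have hb02 : H * |pd 0 (pd 2 u) p| ≤ 53*(G+P) + 6*(t*|F p|) := by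
        have := step ht hH0 hH5 hGP habs02 hb00; linarith
      have hb11 : H * |pd 1 (pd 1 u) p| ≤ 164*(G+P) + 18*(t*|F p|) := by
        have := step ht hH0 hH5 hGP habs11 hb01; linarith
      have hb22 : H * |pd 2 (pd 2 u) p| ≤ 164*(G+P) + 18*(t*|F p|) := by
        have := step ht hH0 hH5 hGP habs22 hb02; linarith
      have hb12 : H * |pd 1 (pd 2 u) p| ≤ 164*(G+P) + 18*(t*|F p|) := by
        have := step ht hH0 hH5 hGP habs12 hb02; linarith
      have htF : (0:ℝ) ≤ t*|F p| := mul_nonneg ht0.le hFnn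
      intro i j
      fin_cases i <;> fin_cases j
      · show H * |pd 0 (pd 0 u) p| ≤ _
        linarith [hb00]
      · show H * |pd 0 (pd 1 u) p| ≤ _
        linarith [hb01]
      · show H * |pd 0 (pd 2 u) p| ≤ _
        linarith [hb02]
      · show H * |pd 1 (pd 0 u) p| ≤ _
        rw [hd01s]; linarith [hb01]
      · show H * |pd 1 (pd 1 u) p| ≤ _
        linarith [hb11]
      · show H * |pd 1 (pd 2 u) p| ≤ _
        linarith [hb12]
      · show H * |pd 2 (pd 0 u) p| ≤ _
        rw [hd02s]; linarith [hb02]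
      · show H * |pd 2 (pd 1 u) p| ≤ _
        rw [hd12s]; linarith [hb12]
      · show H * |pd 2 (pd 2 u) p| ≤ _
        linarith [hb22]
  have hmain := main α β
  have hgoal : (200:ℝ) / H * (G + P) + 200 * t / H * |F p|
      = (200*(G+P) + 200*(t*|F p|)) / H := by
    field_simp
  rw [hgoal, le_div_iff₀ hH0]
  linarith [hmain]
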